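/- Let P be a probability measure on ℝ^k, T_P ∈ ℝ^k, and suppose there exists a unit vector u_0 with P[u_0'(X − T_P) = 0] = s ≥ 1/2. Then the scatter halfspace depth satisfies HD_P(Σ) ≤ 1 − s for every Σ ∈ 𝒫_k; in particular, the depth region R(α) is empty for every α > 1 − s. -/

import Mathlib

open MeasureTheory Matrix

/-- Largest "eigenvalue" via the Rayleigh quotient (equals the largest eigenvalue
for symmetric matrices). -/
noncomputable def lamMax {k : ℕ} (A : Matrix (Fin k) (Fin k) ℝ) : ℝ :=
  ⨆ u : {u : Fin k → ℝ // u ⬝ᵥ u = 1}, u.1 ⬝ᵥ A *ᵥ u.1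

/-- Smallest "eigenvalue" via the Rayleigh quotient. -/
noncomputable def lamMin {k : ℕ} (A : Matrix (Fin k) (Fin k) ℝ) : ℝ :=
  ⨅ u : {u : Fin k → ℝ // u ⬝ᵥ u = 1}, u.1 ⬝ᵥ A *ᵥ u.1

/-- The scatter halfspace depth of a scatter matrix `Sg` w.r.t. the probability
measure `P`, with location `T`. -/
noncomputable def HD {k : ℕ} (P : Measure (Fin k → ℝ)) (T : Fin k → ℝ)
    (Sg : Matrix (Fin k) (Fin k) ℝ) : ℝ :=
  ⨅ u : {u : Fin k → ℝ // u ⬝ᵥ u = 1},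
    min (P {x | |u.1 ⬝ᵥ (x - T)| ≤ Real.sqrt (u.1 ⬝ᵥ Sg *ᵥ u.1)}).toReal
        (P {x | Real.sqrt (u.1 ⬝ᵥ Sg *ᵥ u.1) ≤ |u.1 ⬝ᵥ (x - T)|}).toReal

/-- Matrix square root via the continuous functional calculus. -/
noncomputable def msqrt {k : ℕ} (A : Matrix (Fin k) (Fin k) ℝ) : Matrix (Fin k) (Fin k) ℝ :=
  cfc Real.sqrt A

/-- Matrix logarithm via the continuous functional calculus. -/
noncomputable def mlog {k : ℕ} (A : Matrix (Fin k) (Fin k) ℝ) : Matrix (Fin k) (Fin k) ℝ :=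
  cfc Real.log A

/-- Matrix real power via the continuous functional calculus. -/
noncomputable def mpow {k : ℕ} (A : Matrix (Fin k) (Fin k) ℝ) (t : ℝ) :
    Matrix (Fin k) (Fin k) ℝ :=
  cfc (fun x : ℝ => x ^ t) A

/-- The geodesic path from `A` to `B` in the space of positive definite matrices. -/
noncomputable def geoPath {k : ℕ} (A B : Matrix (Fin k) (Fin k) ℝ) (t : ℝ) :
    Matrix (Fin k) (Fin k) ℝ :=
  msqrt A * mpow ((msqrt A)⁻¹ * B * (msqrt A)⁻¹) t * msqrt A

/-- The harmonic path from `A` to `B`. -/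
noncomputable def harmPath {k : ℕ} (A B : Matrix (Fin k) (Fin k) ℝ) (t : ℝ) :
    Matrix (Fin k) (Fin k) ℝ :=
  ((1 - t) • A⁻¹ + t • B⁻¹)⁻¹

/-- Frobenius norm of a matrix. -/
noncomputable def frob {k : ℕ} (A : Matrix (Fin k) (Fin k) ℝ) : ℝ :=
  Real.sqrt (∑ i, ∑ j, (A i j) ^ 2)

/-- Geodesic distance on the space of positive definite matrices. -/
noncomputable def dg {k : ℕ} (A B : Matrix (Fin k) (Fin k) ℝ) : ℝ :=
  frob (mlog ((msqrt A)⁻¹ * B * (msqrt A)⁻¹))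

/-- Sign vectors in `{-1,1}^k`. -/
def SignVec (k : ℕ) := {s : Fin k → ℝ // ∀ i, s i = 1 ∨ s i = -1}

/-- if some direction `u₀` carries probability mass `s ≥ 1/2` on the
hyperplane through `T_P`, then every scatter matrix has depth at most `1 − s`, and
the depth regions of order `α > 1 − s` are empty. -/
theorem HD_le_of_mass_on_hyperplane {k : ℕ} (P : Measure (Fin k → ℝ))
    [IsProbabilityMeasure P] (T : Fin k → ℝ)
    (u0 : Fin k → ℝ) (hu0 : u0 ⬝ᵥ u0 = 1) (s : ℝ)
    (hs : (P {x | u0 ⬝ᵥ (x - T) = 0}).toReal = s) (hhalf : 1 / 2 ≤ s) :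
    (∀ Sg : Matrix (Fin k) (Fin k) ℝ, Sg.PosDef → HD P T Sg ≤ 1 - s) ∧
      ∀ α : ℝ, 1 - s < α →
        {Sg : Matrix (Fin k) (Fin k) ℝ | Sg.PosDef ∧ α ≤ HD P T Sg} = ∅ := by
  classical
  have hmeas : MeasurableSet {x : Fin k → ℝ | u0 ⬝ᵥ (x - T) = 0} := by
    have hm : Measurable fun x : Fin k → ℝ => u0 ⬝ᵥ (x - T) := by
      simp only [dotProduct, Pi.sub_apply]
      exact Finset.measurable_sum _ fun i _ =>
        (measurable_const.mul ((measurable_pi_apply i).sub measurable_const))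
    exact hm (measurableSet_singleton 0)
  have hcompl : (P {x | u0 ⬝ᵥ (x - T) = 0}ᶜ).toReal = 1 - s := by
    rw [prob_compl_eq_one_sub hmeas, ENNReal.toReal_sub_of_le prob_le_one ENNReal.one_ne_top,
      ENNReal.toReal_one, hs]
  have key : ∀ Sg : Matrix (Fin k) (Fin k) ℝ, Sg.PosDef → HD P T Sg ≤ 1 - s := by
    intro Sg hSg
    have hu0ne : u0 ≠ 0 := by
      intro h; rw [h] at hu0; simp [dotProduct] at hu0
    have hpos : 0 < u0 ⬝ᵥ Sg *ᵥ u0 := by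
      have := hSg.dotProduct_mulVec_pos hu0ne
      simpa using this
    have hsq : 0 < Real.sqrt (u0 ⬝ᵥ Sg *ᵥ u0) := Real.sqrt_pos.mpr hpos
    have hsub : {x : Fin k → ℝ | Real.sqrt (u0 ⬝ᵥ Sg *ᵥ u0) ≤ |u0 ⬝ᵥ (x - T)|}
        ⊆ {x | u0 ⬝ᵥ (x - T) = 0}ᶜ := by
      intro x hx h0
      simp only [Set.mem_setOf_eq] at hx h0
      rw [h0] at hx
      simp at hx
      linarith
    have hbdd : BddBelow (Set.range fun u : {u : Fin k → ℝ // u ⬝ᵥ u = 1} =>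
        min (P {x | |u.1 ⬝ᵥ (x - T)| ≤ Real.sqrt (u.1 ⬝ᵥ Sg *ᵥ u.1)}).toReal
            (P {x | Real.sqrt (u.1 ⬝ᵥ Sg *ᵥ u.1) ≤ |u.1 ⬝ᵥ (x - T)|}).toReal) :=
      ⟨0, by rintro y ⟨u, rfl⟩; exact le_min ENNReal.toReal_nonneg ENNReal.toReal_nonneg⟩
    calc HD P T Sg
        ≤ min (P {x | |u0 ⬝ᵥ (x - T)| ≤ Real.sqrt (u0 ⬝ᵥ Sg *ᵥ u0)}).toReal
            (P {x | Real.sqrt (u0 ⬝ᵥ Sg *ᵥ u0) ≤ |u0 ⬝ᵥ (x - T)|}).toReal :=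
          ciInf_le hbdd ⟨u0, hu0⟩
      _ ≤ (P {x | Real.sqrt (u0 ⬝ᵥ Sg *ᵥ u0) ≤ |u0 ⬝ᵥ (x - T)|}).toReal := min_le_right _ _
      _ ≤ (P {x | u0 ⬝ᵥ (x - T) = 0}ᶜ).toReal :=
          ENNReal.toReal_mono (measure_ne_top _ _) (measure_mono hsub)
      _ = 1 - s := hcompl
  refine ⟨key, fun α hα => ?_⟩
  ext Sg
  simp only [Set.mem_setOf_eq, Set.mem_empty_iff_false, iff_false, not_and, not_le]
  intro hpd
  exact lt_of_le_of_lt (key Sg hpd) hα
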